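/- (Improper Integrals Lemma) Suppose f:[a,b]→ℝ is measurable. If f·χ_{[c,b]} ∈ Den[a,b] for every c ∈ (a,b), then f ∈ Den[a,b] with Denjoy integral ∫_a^b f = L if and only if lim_{c→a⁺} ∫_c^b f exists and equals L. Likewise, if f·χ_{[a,c]} ∈ Den[a,b] for every c ∈ (a,b), then f ∈ Den[a,b] with ∫_a^b f = L if and only if lim_{c→b⁻} ∫_a^c f exists and equals L. -/

import Mathlib

open MeasureTheory Set Filter

noncomputable section

attribute [local instance] Classical.propDecidable

/-- The oscillation `ω(F, J)` of `F` on the set `J`. -/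
def osc (F : ℝ → ℝ) (J : Set ℝ) : ℝ :=
  sSup {d : ℝ | ∃ x ∈ J, ∃ y ∈ J, d = |F x - F y|}

/-- `D` is a `K`-edged pre-partition of `[a,b]`: a finite nonempty collection of
pairwise non-overlapping closed subintervals of `[a,b]` whose endpoints lie in `K`. -/
def IsPrePartition (a b : ℝ) (K : Set ℝ) (D : Finset (ℝ × ℝ)) : Prop :=
  D.Nonempty ∧
  (∀ p ∈ D, p.1 ≤ p.2 ∧ p.1 ∈ K ∧ p.2 ∈ K ∧ Icc p.1 p.2 ⊆ Icc a b) ∧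
  (D : Set (ℝ × ℝ)).Pairwise fun p q => p.2 ≤ q.1 ∨ q.2 ≤ p.1

/-- `F ∈ AC_*(K)`: absolute continuity in the restricted sense on `K`. -/
def ACStar (a b : ℝ) (F : ℝ → ℝ) (K : Set ℝ) : Prop :=
  ∀ ε > (0:ℝ), ∃ δ > (0:ℝ), ∀ D : Finset (ℝ × ℝ), IsPrePartition a b K D →
    (∑ p ∈ D, (p.2 - p.1)) < δ → (∑ p ∈ D, osc F (Icc p.1 p.2)) < ε

/-- `F ∈ ACG_*(K)`: `K` is a countable union of closed sets `Kₙ ⊆ [a,b]` with `F ∈ AC_*(Kₙ)`. -/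
def ACGStar (a b : ℝ) (F : ℝ → ℝ) (K : Set ℝ) : Prop :=
  ∃ C : ℕ → Set ℝ, (∀ n, IsClosed (C n) ∧ C n ⊆ Icc a b ∧ ACStar a b F (C n)) ∧
    K = ⋃ n, C n

/-- `F` is the indefinite Denjoy integral of `f` on `[a,b]`:
`F` is continuous on `[a,b]`, `F(a) = 0`, `F ∈ ACG_*([a,b])`, and `F' = f` a.e. on `[a,b]`. -/
def HasDenjoyIntegralFn (a b : ℝ) (f F : ℝ → ℝ) : Prop :=
  ContinuousOn F (Icc a b) ∧ F a = 0 ∧ ACGStar a b F (Icc a b) ∧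
    ∀ᵐ x ∂(volume.restrict (Icc a b)), HasDerivAt F (f x) x

/-- `f ∈ Den[a,b]`: `f` is Denjoy integrable on `[a,b]`. -/
def DenjoyIntegrable (a b : ℝ) (f : ℝ → ℝ) : Prop :=
  ∃ F : ℝ → ℝ, HasDenjoyIntegralFn a b f F

/-- The Denjoy integral `∫_a^b f` (junk value `0` if `f` is not Denjoy integrable). -/
def denjoyIntegral (a b : ℝ) (f : ℝ → ℝ) : ℝ :=
  if h : DenjoyIntegrable a b f then Classical.choose h b else 0


lemma oscSet_bddAbove {F : ℝ → ℝ} {J : Set ℝ} (hJ : IsCompact J)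
    (hF : ContinuousOn F J) : BddAbove {d : ℝ | ∃ x ∈ J, ∃ y ∈ J, d = |F x - F y|} := by
  rcases J.eq_empty_or_nonempty with h | h
  · simp [h]
  obtain ⟨M, hM⟩ := hJ.exists_bound_of_continuousOn hF
  refine ⟨2 * M, ?_⟩
  rintro d ⟨x, hx, y, hy, rfl⟩
  calc |F x - F y| ≤ |F x| + |F y| := abs_sub _ _
    _ ≤ M + M := add_le_add (hM x hx) (hM y hy)
    _ = 2 * M := by ring

lemma osc_nonneg {F : ℝ → ℝ} {J : Set ℝ} (hJ : IsCompact J) (hF : ContinuousOn F J)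
    (hne : J.Nonempty) : 0 ≤ osc F J := by
  obtain ⟨x, hx⟩ := hne
  exact le_csSup (oscSet_bddAbove hJ hF) ⟨x, hx, x, hx, by simp⟩

lemma abs_sub_le_osc {F : ℝ → ℝ} {J : Set ℝ} (hJ : IsCompact J) (hF : ContinuousOn F J)
    {x y : ℝ} (hx : x ∈ J) (hy : y ∈ J) : |F x - F y| ≤ osc F J :=
  le_csSup (oscSet_bddAbove hJ hF) ⟨x, hx, y, hy, rfl⟩

lemma osc_le {F : ℝ → ℝ} {J : Set ℝ} {M : ℝ} (hne : J.Nonempty)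
    (h : ∀ x ∈ J, ∀ y ∈ J, |F x - F y| ≤ M) : osc F J ≤ M := by
  apply csSup_le
  · obtain ⟨x, hx⟩ := hne; exact ⟨0, x, hx, x, hx, by simp⟩
  · rintro d ⟨x, hx, y, hy, rfl⟩; exact h x hx y hy

lemma osc_sub_le {F G : ℝ → ℝ} {J : Set ℝ} (hJ : IsCompact J)
    (hF : ContinuousOn F J) (hG : ContinuousOn G J) (hne : J.Nonempty) :
    osc (fun x => F x - G x) J ≤ osc F J + osc G J := by
  apply osc_le hne
  intro x hx y hy
  calc |(F x - G x) - (F y - G y)| = |(F x - F y) + (G y - G x)| := by ring_nf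
    _ ≤ |F x - F y| + |G y - G x| := abs_add_le _ _
    _ ≤ osc F J + osc G J :=
      add_le_add (abs_sub_le_osc hJ hF hx hy) (abs_sub_le_osc hJ hG hy hx)

lemma osc_congr {F G : ℝ → ℝ} {J : Set ℝ} (h : ∀ x ∈ J, F x = G x) : osc F J = osc G J := by
  unfold osc
  congr 1
  ext d
  constructor
  · rintro ⟨x, hx, y, hy, rfl⟩; exact ⟨x, hx, y, hy, by rw [h x hx, h y hy]⟩
  · rintro ⟨x, hx, y, hy, rfl⟩; exact ⟨x, hx, y, hy, by rw [h x hx, h y hy]⟩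

lemma osc_add_const {F : ℝ → ℝ} {J : Set ℝ} (c : ℝ) :
    osc (fun x => F x + c) J = osc F J := by
  unfold osc; congr 1; ext d
  constructor
  · rintro ⟨x, hx, y, hy, rfl⟩; exact ⟨x, hx, y, hy, by ring_nf⟩
  · rintro ⟨x, hx, y, hy, rfl⟩; exact ⟨x, hx, y, hy, by ring_nf⟩

lemma volume_image_Icc_le {F : ℝ → ℝ} {c d : ℝ} (hcd : c ≤ d)
    (hF : ContinuousOn F (Icc c d)) :
    volume (F '' Icc c d) ≤ ENNReal.ofReal (osc F (Icc c d)) := by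
  have hcomp : IsCompact (Icc c d) := isCompact_Icc
  have hne : (Icc c d).Nonempty := nonempty_Icc.2 hcd
  obtain ⟨xM, hxM, hmax⟩ := hcomp.exists_isMaxOn hne hF
  obtain ⟨xm, hxm, hmin⟩ := hcomp.exists_isMinOn hne hF
  have himg : F '' Icc c d ⊆ Icc (F xm) (F xM) := by
    rintro z ⟨t, ht, rfl⟩
    exact ⟨hmin ht, hmax ht⟩
  calc volume (F '' Icc c d) ≤ volume (Icc (F xm) (F xM)) := measure_mono himg
    _ = ENNReal.ofReal (F xM - F xm) := by rw [Real.volume_Icc]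
    _ ≤ ENNReal.ofReal (osc F (Icc c d)) := by
        apply ENNReal.ofReal_le_ofReal
        have : F xM - F xm ≤ |F xM - F xm| := le_abs_self _
        exact this.trans (abs_sub_le_osc hcomp hF hxM hxm)

lemma luzin_N {a b : ℝ} {F : ℝ → ℝ} {K : Set ℝ} (hK : IsClosed K) (hKab : K ⊆ Icc a b)
    (hF : ContinuousOn F (Icc a b)) (hAC : ACStar a b F K)
    {E : Set ℝ} (hEK : E ⊆ K) (hE : volume E = 0) : volume (F '' E) = 0 := by
  have key : ∀ ε : ℝ, 0 < ε → volume (F '' E) ≤ ENNReal.ofReal ε := by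
    intro ε hε
    obtain ⟨δ, hδ, hACδ⟩ := hAC ε hε
    have h0 : volume E < ENNReal.ofReal δ := by
      rw [hE]; exact ENNReal.ofReal_pos.2 hδ
    obtain ⟨U, hEU, hUopen, hUvol⟩ := exists_isOpen_lt_of_lt E _ h0
    set V : ℚ → Set ℝ := fun q => connectedComponentIn U (q : ℝ) with hV
    set Q : Set ℚ := {q : ℚ | (q : ℝ) ∈ U ∧ (K ∩ V q).Nonempty} with hQ
    set cc : ℚ → ℝ := fun q => sInf (K ∩ V q) with hcc
    set dd : ℚ → ℝ := fun q => sSup (K ∩ V q) with hdd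
    have hbdd : ∀ q : ℚ, BddBelow (K ∩ V q) ∧ BddAbove (K ∩ V q) := by
      intro q
      constructor
      · exact BddBelow.mono (fun x hx => hKab hx.1) (bddBelow_Icc (a := b) (b := a))
      · exact BddAbove.mono (fun x hx => hKab hx.1) (bddAbove_Icc (a := a) (b := b))
    have hclK : ∀ q : ℚ, closure (K ∩ V q) ⊆ K := by
      intro q
      refine subset_trans (closure_mono inter_subset_left) ?_
      rw [hK.closure_eq]
    have hccK : ∀ q ∈ Q, cc q ∈ K :=
      fun q hq => hclK q (csInf_mem_closure hq.2 (hbdd q).1)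
    have hddK : ∀ q ∈ Q, dd q ∈ K :=
      fun q hq => hclK q (csSup_mem_closure hq.2 (hbdd q).2)
    have hccdd : ∀ q ∈ Q, cc q ≤ dd q := fun q hq => csInf_le_csSup hq.2 (hbdd q).1 (hbdd q).2
    have hccCl : ∀ q ∈ Q, cc q ∈ closure (V q) :=
      fun q hq => closure_mono inter_subset_right (csInf_mem_closure hq.2 (hbdd q).1)
    have hddCl : ∀ q ∈ Q, dd q ∈ closure (V q) :=
      fun q hq => closure_mono inter_subset_right (csSup_mem_closure hq.2 (hbdd q).2)
    have hVord : ∀ q : ℚ, (V q).OrdConnected :=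
      fun q => (isPreconnected_connectedComponentIn).ordConnected
    have hIoo : ∀ q ∈ Q, Ioo (cc q) (dd q) ⊆ V q := by
      intro q hq z hz
      obtain ⟨v1, hv1, hv1z⟩ := exists_lt_of_csInf_lt hq.2 hz.1
      obtain ⟨v2, hv2, hv2z⟩ := exists_lt_of_lt_csSup hq.2 hz.2
      exact (hVord q).out hv1.2 hv2.2 ⟨le_of_lt hv1z, le_of_lt hv2z⟩
    have hVopen : ∀ q : ℚ, IsOpen (V q) := fun q => hUopen.connectedComponentIn
    have hVdisj : ∀ q q' : ℚ, V q ≠ V q' → Disjoint (V q) (V q') := by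
      intro q q' hne
      rw [Set.disjoint_left]
      intro x hx hx'
      exact hne ((connectedComponentIn_eq hx).trans (connectedComponentIn_eq hx').symm)
    have hVeq_of_mem_closure : ∀ q q' : ℚ, ∀ x : ℝ, x ∈ closure (V q) → x ∈ V q' →
        V q = V q' := by
      intro q q' x hxc hx'
      by_contra hne
      have hd := hVdisj q q' hne
      obtain ⟨y, hy⟩ := mem_closure_iff.1 hxc (V q') (hVopen q') hx'
      exact (Set.disjoint_left.1 hd hy.2 hy.1).elim
    set P : Set (ℝ × ℝ) := (fun q => (cc q, dd q)) '' Q with hP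
    have hPcount : P.Countable := (Q.to_countable).image _
    have hcover : E ⊆ ⋃ p ∈ P, Icc p.1 p.2 := by
      intro x hx
      have hxU : x ∈ U := hEU hx
      have hxV : x ∈ connectedComponentIn U x := mem_connectedComponentIn hxU
      have hopen : IsOpen (connectedComponentIn U x) := hUopen.connectedComponentIn
      obtain ⟨r, hr, hball⟩ := Metric.isOpen_iff.1 hopen x hxV
      obtain ⟨q, hq1, hq2⟩ := exists_rat_btwn (show x - r < x + r by linarith)
      have hqball : (q : ℝ) ∈ Metric.ball x r := by
        rw [Real.ball_eq_Ioo]; exact ⟨hq1, hq2⟩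
      have hqV : (q : ℝ) ∈ connectedComponentIn U x := hball hqball
      have hVq : V q = connectedComponentIn U x := (connectedComponentIn_eq hqV).symm
      have hqQ : q ∈ Q := by
        refine ⟨connectedComponentIn_subset U x hqV, ⟨x, hEK hx, ?_⟩⟩
        rw [hVq]; exact hxV
      refine mem_biUnion ⟨q, hqQ, rfl⟩ ?_
      have hxKV : x ∈ K ∩ V q := ⟨hEK hx, by rw [hVq]; exact hxV⟩
      exact ⟨csInf_le (hbdd q).1 hxKV, le_csSup (hbdd q).2 hxKV⟩
    have hwit : ∀ p : ℝ × ℝ, p ∈ P → ∃ q, q ∈ Q ∧ (cc q, dd q) = p := fun p hp => by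
      obtain ⟨q, hq, hqp⟩ := hp; exact ⟨q, hq, hqp⟩
    choose wit hwitQ hwitEq using hwit
    have hwit1 : ∀ p (hp : p ∈ P), cc (wit p hp) = p.1 := fun p hp =>
      congrArg Prod.fst (hwitEq p hp)
    have hwit2 : ∀ p (hp : p ∈ P), dd (wit p hp) = p.2 := fun p hp =>
      congrArg Prod.snd (hwitEq p hp)
    have hP1K : ∀ p ∈ P, p.1 ∈ K := fun p hp => hwit1 p hp ▸ hccK _ (hwitQ p hp)
    have hP2K : ∀ p ∈ P, p.2 ∈ K := fun p hp => hwit2 p hp ▸ hddK _ (hwitQ p hp)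
    have hP12 : ∀ p ∈ P, p.1 ≤ p.2 := fun p hp => by
      rw [← hwit1 p hp, ← hwit2 p hp]; exact hccdd _ (hwitQ p hp)
    have hPIoo : ∀ p (hp : p ∈ P), Ioo p.1 p.2 ⊆ V (wit p hp) := fun p hp => by
      rw [← hwit1 p hp, ← hwit2 p hp]; exact hIoo _ (hwitQ p hp)
    have hPIccCl : ∀ p (hp : p ∈ P), Icc p.1 p.2 ⊆ closure (V (wit p hp)) := by
      intro p hp z hz
      rcases eq_or_lt_of_le hz.1 with h1 | h1
      · rw [← h1, ← hwit1 p hp]; exact hccCl _ (hwitQ p hp)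
      rcases eq_or_lt_of_le hz.2 with h2 | h2
      · rw [h2, ← hwit2 p hp]; exact hddCl _ (hwitQ p hp)
      · exact subset_closure (hPIoo p hp ⟨h1, h2⟩)
    have hVne : ∀ p (hp : p ∈ P), ∀ p' (hp' : p' ∈ P), p ≠ p' →
        V (wit p hp) ≠ V (wit p' hp') := by
      intro p hp p' hp' hne hVeq
      apply hne
      rw [← hwitEq p hp, ← hwitEq p' hp']
      simp only [hcc, hdd, hVeq]
    -- non-overlap of distinct pairs
    have hsep : ∀ p (hp : p ∈ P), ∀ p' (hp' : p' ∈ P), p ≠ p' →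
        p.2 ≤ p'.1 ∨ p'.2 ≤ p.1 := by
      intro p hp p' hp' hne
      by_contra hcon
      push_neg at hcon
      obtain ⟨hc1, hc2⟩ := hcon
      have h12 := hP12 p hp
      have h12' := hP12 p' hp'
      have hVne' := hVne p hp p' hp' hne
      have hdisj := hVdisj _ _ hVne'
      rcases lt_or_ge (max p.1 p'.1) (min p.2 p'.2) with hlt | hge
      · obtain ⟨z, hz1, hz2⟩ := exists_between hlt
        have hzp : z ∈ Ioo p.1 p.2 :=
          ⟨lt_of_le_of_lt (le_max_left _ _) hz1, lt_of_lt_of_le hz2 (min_le_left _ _)⟩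
        have hzp' : z ∈ Ioo p'.1 p'.2 :=
          ⟨lt_of_le_of_lt (le_max_right _ _) hz1, lt_of_lt_of_le hz2 (min_le_right _ _)⟩
        exact (Set.disjoint_left.1 hdisj (hPIoo p hp hzp) (hPIoo p' hp' hzp')).elim
      · set m := max p.1 p'.1 with hm
        have hmeq : m = min p.2 p'.2 := le_antisymm
          (le_min (max_le h12 (le_of_lt hc1)) (max_le (le_of_lt hc2) h12')) hge
        by_cases hin : p.1 < m ∧ m < p.2
        · have hmV : m ∈ V (wit p hp) := hPIoo p hp ⟨hin.1, hin.2⟩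
          have hmCl : m ∈ closure (V (wit p' hp')) := by
            apply hPIccCl p' hp'
            constructor
            · exact le_max_right _ _
            · rw [hmeq]; exact min_le_right _ _
          exact hVne' ((hVeq_of_mem_closure _ _ m hmCl hmV).symm)
        by_cases hin' : p'.1 < m ∧ m < p'.2
        · have hmV : m ∈ V (wit p' hp') := hPIoo p' hp' ⟨hin'.1, hin'.2⟩
          have hmCl : m ∈ closure (V (wit p hp)) := by
            apply hPIccCl p hp
            constructor
            · exact le_max_left _ _
            · rw [hmeq]; exact min_le_left _ _
          exact hVne' (hVeq_of_mem_closure _ _ m hmCl hmV)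
        push_neg at hin hin'
        have hmle2 : m ≤ p.2 := by rw [hmeq]; exact min_le_left _ _
        have hmle2' : m ≤ p'.2 := by rw [hmeq]; exact min_le_right _ _
        have hmge1 : p.1 ≤ m := le_max_left _ _
        have hmge1' : p'.1 ≤ m := le_max_right _ _
        have hA : m = p.1 ∨ m = p.2 := by
          rcases lt_or_ge p.1 m with h | h
          · exact Or.inr (le_antisymm hmle2 (hin h))
          · exact Or.inl (le_antisymm (le_max_left _ _) h).symm
        have hB : m = p'.1 ∨ m = p'.2 := by
          rcases lt_or_ge p'.1 m with h | h
          · exact Or.inr (le_antisymm hmle2' (hin' h))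
          · exact Or.inl (le_antisymm (le_max_right _ _) h).symm
        have hD : m = p.1 ∨ m = p'.1 := max_choice p.1 p'.1
        have hC : m = p.2 ∨ m = p'.2 := by rw [hmeq]; exact min_choice p.2 p'.2
        rcases hA with h1 | h1 <;> rcases hB with h2 | h2 <;> rcases hC with h3 | h3 <;>
          rcases hD with h4 | h4 <;> linarith
    -- now the measure estimate
    calc volume (F '' E) ≤ volume (⋃ p ∈ P, F '' Icc p.1 p.2) := by
          apply measure_mono
          refine subset_trans (Set.image_mono hcover) ?_
          rw [Set.image_iUnion₂]
      _ ≤ ∑' (p : ↥P), volume (F '' Icc (p : ℝ × ℝ).1 (p : ℝ × ℝ).2) :=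
          measure_biUnion_le volume hPcount _
      _ ≤ ENNReal.ofReal ε := by
          rw [ENNReal.tsum_eq_iSup_sum]
          refine iSup_le fun s => ?_
          classical
          set D : Finset (ℝ × ℝ) := Finset.image (fun p : ↥P => (p : ℝ × ℝ)) s with hD
          have hinj : Set.InjOn (fun p : ↥P => (p : ℝ × ℝ)) ↑s :=
            fun x _ y _ h => Subtype.ext h
          have hsum_eq : ∀ (g : ℝ × ℝ → ENNReal),
              ∑ p ∈ s, g ((p : ℝ × ℝ)) = ∑ p ∈ D, g p := fun g =>
            (Finset.sum_image (fun x hx y hy h => hinj hx hy h)).symm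
          have hDP : ∀ p ∈ D, p ∈ P := by
            intro p hp
            obtain ⟨x, _, rfl⟩ := Finset.mem_image.1 hp
            exact x.2
          have hDsub : ∀ p ∈ D, Icc p.1 p.2 ⊆ Icc a b := by
            intro p hp z hz
            have h1 := hKab (hP1K p (hDP p hp))
            have h2 := hKab (hP2K p (hDP p hp))
            exact ⟨le_trans h1.1 hz.1, le_trans hz.2 h2.2⟩
          have hcont : ∀ p ∈ D, ContinuousOn F (Icc p.1 p.2) :=
            fun p hp => hF.mono (hDsub p hp)
          rcases Finset.eq_empty_or_nonempty D with hDe | hDne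
          · rw [hsum_eq (fun p => volume (F '' Icc p.1 p.2)), hDe]
            simp [ENNReal.ofReal_pos.2 hε, le_of_lt]
          -- D is a pre-partition
          have hpre : IsPrePartition a b K D := by
            refine ⟨hDne, fun p hp => ⟨hP12 p (hDP p hp), hP1K p (hDP p hp),
              hP2K p (hDP p hp), hDsub p hp⟩, ?_⟩
            intro p hp p' hp' hne
            exact hsep p (hDP p hp) p' (hDP p' hp') hne
          -- length bound
          have hIooU : ∀ p ∈ D, Ioo p.1 p.2 ⊆ U := by
            intro p hp
            refine subset_trans (hPIoo p (hDP p hp)) ?_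
            exact connectedComponentIn_subset U _
          have hIoodisj : (↑D : Set (ℝ × ℝ)).PairwiseDisjoint
              (fun p : ℝ × ℝ => Ioo p.1 p.2) := by
            intro p hp p' hp' hne
            rcases hsep p (hDP p hp) p' (hDP p' hp') hne with h | h
            · refine Set.disjoint_left.2 fun z hz hz' => ?_
              exact absurd (lt_of_lt_of_le hz.2 (le_trans h (le_of_lt hz'.1))) (lt_irrefl z)
            · refine Set.disjoint_left.2 fun z hz hz' => ?_
              exact absurd (lt_of_lt_of_le hz'.2 (le_trans h (le_of_lt hz.1))) (lt_irrefl z)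
          have hlen : (∑ p ∈ D, (p.2 - p.1)) < δ := by
            have hnn : ∀ p ∈ D, (0:ℝ) ≤ p.2 - p.1 :=
              fun p hp => sub_nonneg.2 (hP12 p (hDP p hp))
            have h1 : ENNReal.ofReal (∑ p ∈ D, (p.2 - p.1)) =
                ∑ p ∈ D, volume (Ioo p.1 p.2) := by
              rw [ENNReal.ofReal_sum_of_nonneg hnn]
              congr 1
              ext p
              rw [Real.volume_Ioo]
            have h2 : ∑ p ∈ D, volume (Ioo p.1 p.2) = volume (⋃ p ∈ D, Ioo p.1 p.2) :=
              (measure_biUnion_finset hIoodisj (fun p _ => measurableSet_Ioo)).symm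
            have h3 : volume (⋃ p ∈ D, Ioo p.1 p.2) ≤ volume U :=
              measure_mono (Set.iUnion₂_subset hIooU)
            have h4 : ENNReal.ofReal (∑ p ∈ D, (p.2 - p.1)) < ENNReal.ofReal δ := by
              rw [h1, h2]; exact lt_of_le_of_lt h3 hUvol
            have h5 : (0:ℝ) ≤ ∑ p ∈ D, (p.2 - p.1) := Finset.sum_nonneg hnn
            exact (ENNReal.ofReal_lt_ofReal_iff_of_nonneg h5).1 h4
          have hosc := hACδ D hpre hlen
          rw [hsum_eq (fun p => volume (F '' Icc p.1 p.2))]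
          calc ∑ p ∈ D, volume (F '' Icc p.1 p.2)
              ≤ ∑ p ∈ D, ENNReal.ofReal (osc F (Icc p.1 p.2)) := by
                refine Finset.sum_le_sum fun p hp => ?_
                exact volume_image_Icc_le (hP12 p (hDP p hp)) (hcont p hp)
            _ = ENNReal.ofReal (∑ p ∈ D, osc F (Icc p.1 p.2)) := by
                rw [ENNReal.ofReal_sum_of_nonneg]
                intro p hp
                exact osc_nonneg isCompact_Icc (hcont p hp)
                  (nonempty_Icc.2 (hP12 p (hDP p hp)))
            _ ≤ ENNReal.ofReal ε := ENNReal.ofReal_le_ofReal (le_of_lt hosc)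
  refine le_antisymm ?_ (zero_le)
  refine ENNReal.le_of_forall_pos_le_add fun ε hε _ => ?_
  rw [zero_add]
  have := key ε (by exact_mod_cast hε)
  rwa [ENNReal.ofReal_coe_nnreal] at this

lemma osc_singleton (F : ℝ → ℝ) (x : ℝ) : osc F (Icc x x) = 0 := by
  have : {d : ℝ | ∃ u ∈ Icc x x, ∃ v ∈ Icc x x, d = |F u - F v|} = {0} := by
    ext d
    simp only [Icc_self, mem_singleton_iff, mem_setOf_eq]
    constructor
    · rintro ⟨u, hu, v, hv, rfl⟩
      rw [hu, hv]; simp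
    · rintro rfl; exact ⟨x, rfl, x, rfl, by simp⟩
  rw [osc, this, csSup_singleton]

lemma volume_image_zero_deriv {s : Set ℝ} {F : ℝ → ℝ} (hs : MeasurableSet s)
    (h : ∀ x ∈ s, HasDerivWithinAt F 0 s x) : volume (F '' s) = 0 := by
  have hle := addHaar_image_le_lintegral_abs_det_fderiv volume hs
    (f' := fun _ => ContinuousLinearMap.smulRight (1 : ℝ →L[ℝ] ℝ) (0:ℝ))
    (fun x hx => (h x hx).hasFDerivWithinAt)
  simp only [ContinuousLinearMap.smulRight_one_eq_toSpanSingleton, ContinuousLinearMap.det_toSpanSingleton, abs_zero, ENNReal.ofReal_zero, lintegral_const,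
    zero_mul, le_zero_iff] at hle
  exact hle

theorem constant_of_ACGStar {a b : ℝ} (hab : a ≤ b) {F : ℝ → ℝ}
    (hF : ContinuousOn F (Icc a b)) (hACG : ACGStar a b F (Icc a b))
    (hder : ∀ᵐ x ∂(volume.restrict (Icc a b)), HasDerivAt F 0 x) :
    ∀ x ∈ Icc a b, F x = F a := by
  obtain ⟨C, hC, hCuni⟩ := hACG
  obtain ⟨N, hNsub, hNmeas, hN0⟩ := exists_measurable_superset_of_null hder
  have hN0' : volume (N ∩ Icc a b) = 0 := by
    rwa [Measure.restrict_apply hNmeas] at hN0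
  set s := Icc a b \ (N ∩ Icc a b) with hsdef
  have hs : MeasurableSet s := measurableSet_Icc.diff (hNmeas.inter measurableSet_Icc)
  have hds : ∀ x ∈ s, HasDerivWithinAt F 0 s x := by
    intro x hx
    have hxN : x ∉ N := fun hN => hx.2 ⟨hN, hx.1⟩
    have : HasDerivAt F 0 x := by
      by_contra hcon
      exact hxN (hNsub hcon)
    exact this.hasDerivWithinAt
  have h1 : volume (F '' s) = 0 := volume_image_zero_deriv hs hds
  have h2 : volume (F '' (N ∩ Icc a b)) = 0 := by
    have hsub : F '' (N ∩ Icc a b) ⊆ ⋃ n, F '' ((N ∩ Icc a b) ∩ C n) := by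
      rintro z ⟨x, hx, rfl⟩
      have : x ∈ ⋃ n, C n := hCuni ▸ hx.2
      obtain ⟨n, hn⟩ := mem_iUnion.1 this
      exact mem_iUnion.2 ⟨n, mem_image_of_mem F ⟨hx, hn⟩⟩
    refine measure_mono_null hsub (measure_iUnion_null fun n => ?_)
    exact luzin_N (hC n).1 (hC n).2.1 hF (hC n).2.2 inter_subset_right
      (measure_mono_null inter_subset_left hN0')
  have h3 : volume (F '' Icc a b) = 0 := by
    have hsub : F '' Icc a b ⊆ F '' s ∪ F '' (N ∩ Icc a b) := by
      rw [← image_union]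
      apply image_mono
      intro x hx
      by_cases hxN : x ∈ N ∩ Icc a b
      · exact Or.inr hxN
      · exact Or.inl ⟨hx, hxN⟩
    exact measure_mono_null hsub (measure_union_null h1 h2)
  intro x hx
  by_contra hne
  have hpc : IsPreconnected (F '' Icc a b) := isPreconnected_Icc.image F hF
  have hoc := hpc.ordConnected
  have hFa : F a ∈ F '' Icc a b := mem_image_of_mem F (left_mem_Icc.2 hab)
  have hFx : F x ∈ F '' Icc a b := mem_image_of_mem F hx
  have hIcc : Icc (min (F x) (F a)) (max (F x) (F a)) ⊆ F '' Icc a b := by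
    rcases le_total (F x) (F a) with h | h
    · rw [min_eq_left h, max_eq_right h]; exact hoc.out hFx hFa
    · rw [min_eq_right h, max_eq_left h]; exact hoc.out hFa hFx
  have hpos : (0:ℝ) < max (F x) (F a) - min (F x) (F a) := by
    rcases lt_or_gt_of_ne hne with h | h
    · rw [min_eq_left (le_of_lt h), max_eq_right (le_of_lt h)]; linarith
    · rw [min_eq_right (le_of_lt h), max_eq_left (le_of_lt h)]; linarith
  have h4 := measure_mono_null hIcc h3
  rw [Real.volume_Icc] at h4
  have hpos' : (0:ENNReal) < ENNReal.ofReal (max (F x) (F a) - min (F x) (F a)) :=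
    ENNReal.ofReal_pos.2 hpos
  rw [h4] at hpos'
  exact lt_irrefl 0 hpos'

lemma isPrePartition_iff_sub {a b c d : ℝ} (hac : a ≤ c) (hdb : d ≤ b) {K : Set ℝ}
    (hK : K ⊆ Icc c d) {D : Finset (ℝ × ℝ)} :
    IsPrePartition a b K D ↔ IsPrePartition c d K D := by
  constructor <;> rintro ⟨h1, h2, h3⟩ <;> refine ⟨h1, fun p hp => ?_, h3⟩
  · obtain ⟨hle, hm1, hm2, _⟩ := h2 p hp
    refine ⟨hle, hm1, hm2, fun z hz => ⟨le_trans (hK hm1).1 hz.1, le_trans hz.2 (hK hm2).2⟩⟩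
  · obtain ⟨hle, hm1, hm2, hsub⟩ := h2 p hp
    refine ⟨hle, hm1, hm2, fun z hz => ?_⟩
    have := hsub hz
    exact ⟨le_trans hac this.1, le_trans this.2 hdb⟩

lemma ACStar_iff_sub {a b c d : ℝ} (hac : a ≤ c) (hdb : d ≤ b) {F : ℝ → ℝ} {K : Set ℝ}
    (hK : K ⊆ Icc c d) : ACStar a b F K ↔ ACStar c d F K := by
  constructor <;> intro h ε hε <;> obtain ⟨δ, hδ, hh⟩ := h ε hε <;> refine ⟨δ, hδ, fun D hD => ?_⟩
  · exact hh D ((isPrePartition_iff_sub hac hdb hK).2 hD)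
  · exact hh D ((isPrePartition_iff_sub hac hdb hK).1 hD)

lemma ACStar_congr {a b : ℝ} {F G : ℝ → ℝ} {K : Set ℝ} (hK : K ⊆ Icc a b)
    (heq : ∀ x ∈ Icc a b, F x = G x) (h : ACStar a b F K) : ACStar a b G K := by
  intro ε hε
  obtain ⟨δ, hδ, hh⟩ := h ε hε
  refine ⟨δ, hδ, fun D hD hlen => ?_⟩
  have hsum : ∑ p ∈ D, osc G (Icc p.1 p.2) = ∑ p ∈ D, osc F (Icc p.1 p.2) := by
    apply Finset.sum_congr rfl
    intro p hp
    apply osc_congr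
    intro x hxp
    exact (heq x ((hD.2.1 p hp).2.2.2 hxp)).symm
  rw [hsum]
  exact hh D hD hlen

theorem denjoy_primitive_unique {a b : ℝ} (hab : a ≤ b) {f F G : ℝ → ℝ}
    (hF : HasDenjoyIntegralFn a b f F) (hG : HasDenjoyIntegralFn a b f G) :
    ∀ x ∈ Icc a b, F x = G x := by
  obtain ⟨hFc, hFa, ⟨C, hC, hCuni⟩, hFd⟩ := hF
  obtain ⟨hGc, hGa, ⟨C', hC', hCuni'⟩, hGd⟩ := hG
  set H : ℝ → ℝ := fun x => F x - G x with hH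
  have hHc : ContinuousOn H (Icc a b) := hFc.sub hGc
  have hHACG : ACGStar a b H (Icc a b) := by
    refine ⟨fun n => C (Nat.unpair n).1 ∩ C' (Nat.unpair n).2, fun n => ?_, ?_⟩
    · obtain ⟨hcl, hsub, hAC⟩ := hC (Nat.unpair n).1
      obtain ⟨hcl', hsub', hAC'⟩ := hC' (Nat.unpair n).2
      refine ⟨hcl.inter hcl', subset_trans inter_subset_left hsub, ?_⟩
      intro ε hε
      obtain ⟨δ1, hδ1, h1⟩ := hAC (ε/2) (by linarith)
      obtain ⟨δ2, hδ2, h2⟩ := hAC' (ε/2) (by linarith)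
      refine ⟨min δ1 δ2, lt_min hδ1 hδ2, fun D hD hlen => ?_⟩
      have hD1 : IsPrePartition a b (C (Nat.unpair n).1) D :=
        ⟨hD.1, fun p hp => ⟨(hD.2.1 p hp).1, (hD.2.1 p hp).2.1.1, (hD.2.1 p hp).2.2.1.1,
          (hD.2.1 p hp).2.2.2⟩, hD.2.2⟩
      have hD2 : IsPrePartition a b (C' (Nat.unpair n).2) D :=
        ⟨hD.1, fun p hp => ⟨(hD.2.1 p hp).1, (hD.2.1 p hp).2.1.2, (hD.2.1 p hp).2.2.1.2,
          (hD.2.1 p hp).2.2.2⟩, hD.2.2⟩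
      have hosc : ∀ p ∈ D, osc H (Icc p.1 p.2) ≤
          osc F (Icc p.1 p.2) + osc G (Icc p.1 p.2) := by
        intro p hp
        have hsub := (hD.2.1 p hp).2.2.2
        exact osc_sub_le isCompact_Icc (hFc.mono hsub) (hGc.mono hsub)
          (nonempty_Icc.2 (hD.2.1 p hp).1)
      calc ∑ p ∈ D, osc H (Icc p.1 p.2)
          ≤ ∑ p ∈ D, (osc F (Icc p.1 p.2) + osc G (Icc p.1 p.2)) :=
            Finset.sum_le_sum hosc
        _ = ∑ p ∈ D, osc F (Icc p.1 p.2) + ∑ p ∈ D, osc G (Icc p.1 p.2) :=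
            Finset.sum_add_distrib
        _ < ε/2 + ε/2 := add_lt_add
            (h1 D hD1 (lt_of_lt_of_le hlen (min_le_left _ _)))
            (h2 D hD2 (lt_of_lt_of_le hlen (min_le_right _ _)))
        _ = ε := by ring
    · ext x
      simp only [mem_iUnion]
      constructor
      · intro hx
        have hx1 : x ∈ ⋃ n, C n := hCuni ▸ hx
        have hx2 : x ∈ ⋃ n, C' n := hCuni' ▸ hx
        obtain ⟨n, hn⟩ := mem_iUnion.1 hx1
        obtain ⟨m, hm⟩ := mem_iUnion.1 hx2
        refine ⟨Nat.pair n m, ?_⟩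
        rw [Nat.unpair_pair]
        exact ⟨hn, hm⟩
      · rintro ⟨n, hn⟩
        exact (hC (Nat.unpair n).1).2.1 hn.1
  have hHd : ∀ᵐ x ∂(volume.restrict (Icc a b)), HasDerivAt H 0 x := by
    filter_upwards [hFd, hGd] with x h1 h2
    have := h1.sub h2
    rwa [sub_self] at this
  have := constant_of_ACGStar hab hHc hHACG hHd
  intro x hx
  have hx2 := this x hx
  have : H a = 0 := by rw [hH]; simp [hFa, hGa]
  have : H x = 0 := by rw [hx2, this]
  have : F x - G x = 0 := this
  linarith

theorem restrict_primitive {a b c d : ℝ} (hac : a ≤ c) (hcd : c ≤ d) (hdb : d ≤ b)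
    {f F : ℝ → ℝ} (hF : HasDenjoyIntegralFn a b f F) :
    HasDenjoyIntegralFn c d f (fun x => F x - F c) := by
  obtain ⟨hFc, hFa, ⟨C, hC, hCuni⟩, hFd⟩ := hF
  have hsub : Icc c d ⊆ Icc a b := Icc_subset_Icc hac hdb
  refine ⟨(hFc.mono hsub).sub continuousOn_const, by simp, ?_, ?_⟩
  · refine ⟨fun n => C n ∩ Icc c d, fun n => ?_, ?_⟩
    · obtain ⟨hcl, hsubn, hAC⟩ := hC n
      refine ⟨hcl.inter isClosed_Icc, inter_subset_right, ?_⟩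
      have h1 : ACStar a b F (C n ∩ Icc c d) := by
        intro ε hε
        obtain ⟨δ, hδ, hh⟩ := hAC ε hε
        refine ⟨δ, hδ, fun D hD => hh D ⟨hD.1, fun p hp => ⟨(hD.2.1 p hp).1,
          (hD.2.1 p hp).2.1.1, (hD.2.1 p hp).2.2.1.1, (hD.2.1 p hp).2.2.2⟩, hD.2.2⟩⟩
      have h2 : ACStar c d F (C n ∩ Icc c d) :=
        (ACStar_iff_sub hac hdb inter_subset_right).1 h1
      exact ACStar_congr inter_subset_right (fun x _ => rfl) <| by
        intro ε hε
        obtain ⟨δ, hδ, hh⟩ := h2 ε hε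
        refine ⟨δ, hδ, fun D hD hlen => ?_⟩
        have : ∑ p ∈ D, osc (fun x => F x - F c) (Icc p.1 p.2) =
            ∑ p ∈ D, osc F (Icc p.1 p.2) := by
          apply Finset.sum_congr rfl
          intro p hp
          have : (fun x => F x - F c) = (fun x => F x + (-F c)) := by
            funext x; ring
          rw [this, osc_add_const]
        rw [this]
        exact hh D hD hlen
    · rw [← iUnion_inter, ← hCuni]
      rw [inter_eq_self_of_subset_right hsub]
  · have := ae_restrict_of_ae_restrict_of_subset hsub hFd
    filter_upwards [this] with x hx
    exact hx.sub_const _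

lemma denjoyIntegral_eq {a b : ℝ} (hab : a ≤ b) {f F : ℝ → ℝ}
    (hF : HasDenjoyIntegralFn a b f F) : denjoyIntegral a b f = F b := by
  have h : DenjoyIntegrable a b f := ⟨F, hF⟩
  rw [denjoyIntegral, dif_pos h]
  exact denjoy_primitive_unique hab (Classical.choose_spec h) hF b (right_mem_Icc.2 hab)

lemma denjoyIntegral_subinterval {a b c d : ℝ} (hac : a ≤ c) (hcd : c ≤ d) (hdb : d ≤ b)
    {f F : ℝ → ℝ} (hF : HasDenjoyIntegralFn a b f F) :
    denjoyIntegral c d f = F d - F c :=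
  denjoyIntegral_eq hcd (restrict_primitive hac hcd hdb hF)

lemma hasDenjoy_point (b : ℝ) (f : ℝ → ℝ) : HasDenjoyIntegralFn b b f (fun _ => 0) := by
  refine ⟨continuousOn_const, rfl, ⟨fun _ => {b}, fun n => ?_, by simp⟩, ?_⟩
  · refine ⟨isClosed_singleton, by simp, ?_⟩
    intro ε hε
    refine ⟨1, one_pos, fun D hD _ => ?_⟩
    have : ∑ p ∈ D, osc (fun _ : ℝ => (0:ℝ)) (Icc p.1 p.2) = 0 := by
      apply Finset.sum_eq_zero
      intro p hp
      have h1 : p.1 = b := (hD.2.1 p hp).2.1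
      have h2 : p.2 = b := (hD.2.1 p hp).2.2.1
      rw [h1, h2, osc_singleton]
    rw [this]; exact hε
  · have : volume.restrict (Icc b b) = 0 := by
      rw [Measure.restrict_eq_zero]
      simp [Icc_self]
    rw [this]
    simp

lemma denjoyIntegral_point (b : ℝ) (f : ℝ → ℝ) : denjoyIntegral b b f = 0 :=
  denjoyIntegral_eq le_rfl (hasDenjoy_point b f)

lemma ACStar_const_add {a b e : ℝ} {F : ℝ → ℝ} {K : Set ℝ} (h : ACStar a b F K) :
    ACStar a b (fun x => e + F x) K := by
  intro ε hε
  obtain ⟨δ, hδ, hh⟩ := h ε hε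
  refine ⟨δ, hδ, fun D hD hlen => ?_⟩
  have : ∑ p ∈ D, osc (fun x => e + F x) (Icc p.1 p.2) = ∑ p ∈ D, osc F (Icc p.1 p.2) := by
    apply Finset.sum_congr rfl
    intro p hp
    have h2 : (fun x => e + F x) = (fun x => F x + e) := by funext x; ring
    rw [h2, osc_add_const]
  rw [this]
  exact hh D hD hlen

lemma ACStar_singleton (a b x : ℝ) (F : ℝ → ℝ) (hx : x ∈ Icc a b) :
    ACStar a b F {x} := by
  intro ε hε
  refine ⟨1, one_pos, fun D hD _ => ?_⟩
  have : ∑ p ∈ D, osc F (Icc p.1 p.2) = 0 := by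
    apply Finset.sum_eq_zero
    intro p hp
    have h1 : p.1 = x := (hD.2.1 p hp).2.1
    have h2 : p.2 = x := (hD.2.1 p hp).2.2.1
    rw [h1, h2, osc_singleton]
  rw [this]; exact hε

lemma glue_left {a b L : ℝ} (hab : a < b) {f : ℝ → ℝ}
    (hc : ∀ c ∈ Ioo a b, DenjoyIntegrable c b f)
    (hT : Tendsto (fun c => denjoyIntegral c b f) (nhdsWithin a (Ioi a)) (nhds L)) :
    DenjoyIntegrable a b f ∧ denjoyIntegral a b f = L := by
  classical
  choose! Fc hFc using hc
  set G : ℝ → ℝ := fun x => if x ≤ a then 0 else L - denjoyIntegral x b f with hG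
  have hGa : G a = 0 := by rw [hG]; simp
  have hGb : G b = L := by
    rw [hG]; simp only []
    rw [if_neg (not_le.2 hab), denjoyIntegral_point]; ring
  have hval : ∀ c ∈ Ioo a b, ∀ x ∈ Icc c b, G x = L - Fc c b + Fc c x := by
    intro c hcI x hx
    have hxa : ¬ x ≤ a := not_le.2 (lt_of_lt_of_le hcI.1 hx.1)
    have hdi : denjoyIntegral x b f = Fc c b - Fc c x := by
      have h1 := restrict_primitive hx.1 hx.2 (le_refl b) (hFc c hcI)
      have h2 := denjoyIntegral_eq hx.2 h1
      simpa using h2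
    rw [hG]; simp only []
    rw [if_neg hxa, hdi]; ring
  -- continuity
  have hcont : ContinuousOn G (Icc a b) := by
    intro x hx
    rcases eq_or_lt_of_le hx.1 with hax | hax
    · -- x = a
      rw [← hax]
      have hpure : Tendsto G (nhdsWithin a {a}) (nhds (G a)) := by
        rw [nhdsWithin_singleton]
        exact tendsto_pure_nhds G a
      have hIoc : Tendsto G (nhdsWithin a (Ioc a b)) (nhds (G a)) := by
        rw [hGa]
        have h2 : Tendsto (fun y => L - denjoyIntegral y b f) (nhdsWithin a (Ioi a))
            (nhds (L - L)) := tendsto_const_nhds.sub hT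
        rw [sub_self] at h2
        have h3 : Tendsto (fun y => L - denjoyIntegral y b f) (nhdsWithin a (Ioc a b))
            (nhds 0) := h2.mono_left (nhdsWithin_mono a Ioc_subset_Ioi_self)
        refine Tendsto.congr' ?_ h3
        filter_upwards [self_mem_nhdsWithin] with y hy
        rw [hG]; simp only []
        rw [if_neg (not_le.2 hy.1)]
      have hsplit : nhdsWithin a (Icc a b) = nhdsWithin a ({a} ∪ Ioc a b) := by
        rw [← Ioc_insert_left hab.le, insert_eq]
      rw [ContinuousWithinAt, hsplit, nhdsWithin_union]
      exact tendsto_sup.2 ⟨hpure, hIoc⟩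
    · -- a < x
      set c := (a + x)/2 with hcdef
      have hcI : c ∈ Ioo a b := ⟨by simp only [hcdef]; linarith, by simp only [hcdef]; linarith [hx.2]⟩
      have hcx : c < x := by simp only [hcdef]; linarith
      have hxcb : x ∈ Icc c b := ⟨hcx.le, hx.2⟩
      have hFcc : ContinuousOn (fun y => L - Fc c b + Fc c y) (Icc c b) :=
        continuousOn_const.add (hFc c hcI).1
      have h1 : ContinuousWithinAt (fun y => L - Fc c b + Fc c y) (Icc c b) x := hFcc x hxcb
      have h2 : ContinuousWithinAt (fun y => L - Fc c b + Fc c y) (Icc a b ∩ Ioi c) x :=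
        h1.mono (fun z hz => ⟨hz.2.le, hz.1.2⟩)
      have h3 : ContinuousWithinAt G (Icc a b ∩ Ioi c) x := by
        refine h2.congr ?_ ?_
        · intro z hz; exact hval c hcI z ⟨hz.2.le, hz.1.2⟩
        · exact hval c hcI x hxcb
      exact h3.mono_of_mem_nhdsWithin (inter_mem self_mem_nhdsWithin
        (mem_nhdsWithin_of_mem_nhds (Ioi_mem_nhds hcx)))
  -- the sequence of cut points
  set cseq : ℕ → ℝ := fun n => a + (b - a)/(n + 2) with hcs
  have hcseqI : ∀ n : ℕ, cseq n ∈ Ioo a b := by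
    intro n
    have hn2 : (0:ℝ) < (n:ℝ) + 2 := by positivity
    have hba : (0:ℝ) < b - a := by linarith
    constructor
    · have : (0:ℝ) < (b - a)/((n:ℝ) + 2) := div_pos hba hn2
      simp only [hcs]; linarith
    · have h2 : (b - a)/((n:ℝ) + 2) < b - a := by
        apply div_lt_self hba
        have : (0:ℝ) ≤ (n:ℝ) := Nat.cast_nonneg n
        linarith
      simp only [hcs]; linarith
  have hcseq_lt : ∀ x, a < x → ∃ n : ℕ, cseq n < x := by
    intro x hax
    obtain ⟨N, hN⟩ := exists_nat_gt ((b - a)/(x - a))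
    refine ⟨N, ?_⟩
    have hxa : (0:ℝ) < x - a := by linarith
    have hba : (0:ℝ) < b - a := by linarith
    have hN2 : (b - a)/(x - a) < (N:ℝ) + 2 := by
      have : (0:ℝ) ≤ (N:ℝ) := Nat.cast_nonneg N
      linarith
    have hN2pos : (0:ℝ) < (N:ℝ) + 2 := by positivity
    have : (b - a)/((N:ℝ) + 2) < x - a := by
      rw [div_lt_iff₀ hN2pos]
      have := (div_lt_iff₀ hxa).1 hN2
      linarith [mul_comm ((N:ℝ) + 2) (x - a)]
    simp only [hcs]; linarith
  -- ACG* pieces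
  have hACn : ∀ n : ℕ, ∃ C : ℕ → Set ℝ,
      (∀ m, IsClosed (C m) ∧ C m ⊆ Icc a b ∧ ACStar a b G (C m)) ∧
      Icc (cseq n) b = ⋃ m, C m := by
    intro n
    obtain ⟨hFcont, hFz, ⟨C, hC, hCuni⟩, hFd⟩ := hFc (cseq n) (hcseqI n)
    refine ⟨C, fun m => ?_, hCuni⟩
    obtain ⟨hcl, hsub, hAC⟩ := hC m
    have hsub' : C m ⊆ Icc a b :=
      subset_trans hsub (Icc_subset_Icc (hcseqI n).1.le le_rfl)
    refine ⟨hcl, hsub', ?_⟩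
    have h1 : ACStar (cseq n) b (fun x => (L - Fc (cseq n) b) + Fc (cseq n) x) (C m) :=
      ACStar_const_add hAC
    have h2 : ACStar (cseq n) b G (C m) := by
      refine ACStar_congr hsub (fun x hx => ?_) h1
      exact (hval (cseq n) (hcseqI n) x hx).symm
    exact (ACStar_iff_sub (hcseqI n).1.le le_rfl hsub).2 h2
  choose CC hCC hCCuni using hACn
  have hACG : ACGStar a b G (Icc a b) := by
    refine ⟨fun k => Nat.casesOn k ({a} : Set ℝ)
      (fun k' => CC (Nat.unpair k').1 (Nat.unpair k').2), fun k => ?_, ?_⟩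
    · cases k with
      | zero =>
        exact ⟨isClosed_singleton, by simp [hab.le], ACStar_singleton a b a G (left_mem_Icc.2 hab.le)⟩
      | succ k' =>
        exact hCC (Nat.unpair k').1 (Nat.unpair k').2
    · ext x
      simp only [mem_iUnion]
      constructor
      · intro hx
        rcases eq_or_lt_of_le hx.1 with hax | hax
        · refine ⟨0, ?_⟩
          show x ∈ ({a} : Set ℝ)
          rw [← hax]
          exact rfl
        · obtain ⟨n, hn⟩ := hcseq_lt x hax
          have : x ∈ Icc (cseq n) b := ⟨hn.le, hx.2⟩
          rw [hCCuni n] at this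
          obtain ⟨m, hm⟩ := mem_iUnion.1 this
          refine ⟨Nat.pair n m + 1, ?_⟩
          simp only [Nat.unpair_pair]
          exact hm
      · rintro ⟨k, hk⟩
        cases k with
        | zero =>
          have hxa : x ∈ ({a} : Set ℝ) := hk
          rw [mem_singleton_iff] at hxa
          rw [hxa]; exact left_mem_Icc.2 hab.le
        | succ k' =>
          exact (hCC (Nat.unpair k').1 (Nat.unpair k').2).2.1 hk
  -- derivative a.e.
  have hder : ∀ᵐ x ∂(volume.restrict (Icc a b)), HasDerivAt G (f x) x := by
    rw [ae_iff]
    set B := {x : ℝ | ¬ HasDerivAt G (f x) x} with hB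
    have hB1 : ∀ n : ℕ, volume (B ∩ Ioo (cseq n) b) = 0 := by
      intro n
      obtain ⟨hFcont, hFz, hFACG, hFd⟩ := hFc (cseq n) (hcseqI n)
      have h0 : (volume.restrict (Icc (cseq n) b))
          {x | ¬ HasDerivAt (Fc (cseq n)) (f x) x} = 0 := ae_iff.1 hFd
      obtain ⟨N, hNsub, hNmeas, hN0⟩ := exists_measurable_superset_of_null h0
      have hN0' : volume (N ∩ Icc (cseq n) b) = 0 := by
        rwa [Measure.restrict_apply hNmeas] at hN0
      refine measure_mono_null ?_ hN0'
      rintro x ⟨hxB, hxI⟩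
      constructor
      · by_contra hxN
        have hP : HasDerivAt (Fc (cseq n)) (f x) x := by
          by_contra hcon
          exact hxN (hNsub hcon)
        have hev : (fun y => (L - Fc (cseq n) b) + Fc (cseq n) y) =ᶠ[nhds x] G := by
          filter_upwards [(isOpen_Ioo).mem_nhds hxI] with y hy
          exact (hval (cseq n) (hcseqI n) y (Ioo_subset_Icc_self hy)).symm
        have : HasDerivAt G (f x) x := (hP.const_add (L - Fc (cseq n) b)).congr_of_eventuallyEq hev.symm
        exact hxB this
      · exact Ioo_subset_Icc_self hxI
    have hB2 : volume (B ∩ Ioo a b) = 0 := by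
      refine measure_mono_null ?_ (measure_iUnion_null hB1)
      rintro x ⟨hxB, hxI⟩
      obtain ⟨n, hn⟩ := hcseq_lt x hxI.1
      exact mem_iUnion.2 ⟨n, hxB, hn, hxI.2⟩
    have hcov : B ⊆ (Icc a b)ᶜ ∪ ((Icc a b \ Ioo a b) ∪ (B ∩ Ioo a b)) := by
      intro x hx
      by_cases h1 : x ∈ Icc a b
      · by_cases h2 : x ∈ Ioo a b
        · exact Or.inr (Or.inr ⟨hx, h2⟩)
        · exact Or.inr (Or.inl ⟨h1, h2⟩)
      · exact Or.inl h1
    refine measure_mono_null hcov ?_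
    refine measure_union_null ?_ (measure_union_null ?_ ?_)
    · rw [Measure.restrict_apply (measurableSet_Icc.compl)]
      simp
    · rw [Measure.restrict_apply (measurableSet_Icc.diff measurableSet_Ioo)]
      refine measure_mono_null (fun x hx => hx.1) ?_
      rw [Icc_diff_Ioo_same hab.le, insert_eq]
      exact measure_union_null Real.volume_singleton Real.volume_singleton
    · exact le_antisymm ((Measure.le_iff'.1 Measure.restrict_le_self _).trans hB2.le)
        (zero_le)
  have hGden : HasDenjoyIntegralFn a b f G := ⟨hcont, hGa, hACG, hder⟩
  exact ⟨⟨G, hGden⟩, by rw [denjoyIntegral_eq hab.le hGden, hGb]⟩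

lemma glue_right {a b L : ℝ} (hab : a < b) {f : ℝ → ℝ}
    (hc : ∀ c ∈ Ioo a b, DenjoyIntegrable a c f)
    (hT : Tendsto (fun c => denjoyIntegral a c f) (nhdsWithin b (Iio b)) (nhds L)) :
    DenjoyIntegrable a b f ∧ denjoyIntegral a b f = L := by
  classical
  choose! Fc hFc using hc
  set G : ℝ → ℝ := fun x => if b ≤ x then L else denjoyIntegral a x f with hG
  have hGb : G b = L := by rw [hG]; simp
  have hGa : G a = 0 := by
    rw [hG]; simp only []
    rw [if_neg (not_le.2 hab), denjoyIntegral_point]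
  have hval : ∀ c ∈ Ioo a b, ∀ x ∈ Icc a c, G x = Fc c x := by
    intro c hcI x hx
    have hxb : ¬ b ≤ x := not_le.2 (lt_of_le_of_lt hx.2 hcI.2)
    have hdi : denjoyIntegral a x f = Fc c x - Fc c a := by
      have h1 := restrict_primitive (le_refl a) hx.1 hx.2 (hFc c hcI)
      exact denjoyIntegral_eq hx.1 h1
    rw [hG]; simp only []
    rw [if_neg hxb, hdi, (hFc c hcI).2.1, sub_zero]
  -- continuity
  have hcont : ContinuousOn G (Icc a b) := by
    intro x hx
    rcases eq_or_lt_of_le hx.2 with hbx | hbx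
    · -- x = b
      rw [hbx]
      have hpure : Tendsto G (nhdsWithin b {b}) (nhds (G b)) := by
        rw [nhdsWithin_singleton]
        exact tendsto_pure_nhds G b
      have hIco : Tendsto G (nhdsWithin b (Ico a b)) (nhds (G b)) := by
        rw [hGb]
        have h3 : Tendsto (fun y => denjoyIntegral a y f) (nhdsWithin b (Ico a b))
            (nhds L) := hT.mono_left (nhdsWithin_mono b Ico_subset_Iio_self)
        refine Tendsto.congr' ?_ h3
        filter_upwards [self_mem_nhdsWithin] with y hy
        rw [hG]; simp only []
        rw [if_neg (not_le.2 hy.2)]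
      have hsplit : nhdsWithin b (Icc a b) = nhdsWithin b ({b} ∪ Ico a b) := by
        rw [← Ico_insert_right hab.le, insert_eq]
      rw [ContinuousWithinAt, hsplit, nhdsWithin_union]
      exact tendsto_sup.2 ⟨hpure, hIco⟩
    · -- x < b
      set c := (x + b)/2 with hcdef
      have hcI : c ∈ Ioo a b := ⟨by simp only [hcdef]; linarith [hx.1], by simp only [hcdef]; linarith⟩
      have hxc : x < c := by simp only [hcdef]; linarith
      have hxac : x ∈ Icc a c := ⟨hx.1, hxc.le⟩
      have h1 : ContinuousWithinAt (Fc c) (Icc a c) x := (hFc c hcI).1 x hxac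
      have h2 : ContinuousWithinAt (Fc c) (Icc a b ∩ Iio c) x :=
        h1.mono (fun z hz => ⟨hz.1.1, hz.2.le⟩)
      have h3 : ContinuousWithinAt G (Icc a b ∩ Iio c) x := by
        refine h2.congr ?_ ?_
        · intro z hz; exact hval c hcI z ⟨hz.1.1, hz.2.le⟩
        · exact hval c hcI x hxac
      exact h3.mono_of_mem_nhdsWithin (inter_mem self_mem_nhdsWithin
        (mem_nhdsWithin_of_mem_nhds (Iio_mem_nhds hxc)))
  -- cut points
  set cseq : ℕ → ℝ := fun n => b - (b - a)/(n + 2) with hcs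
  have hcseqI : ∀ n : ℕ, cseq n ∈ Ioo a b := by
    intro n
    have hn2 : (0:ℝ) < (n:ℝ) + 2 := by positivity
    have hba : (0:ℝ) < b - a := by linarith
    constructor
    · have h2 : (b - a)/((n:ℝ) + 2) < b - a := by
        apply div_lt_self hba
        have : (0:ℝ) ≤ (n:ℝ) := Nat.cast_nonneg n
        linarith
      simp only [hcs]; linarith
    · have : (0:ℝ) < (b - a)/((n:ℝ) + 2) := div_pos hba hn2
      simp only [hcs]; linarith
  have hcseq_gt : ∀ x, x < b → ∃ n : ℕ, x < cseq n := by
    intro x hxb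
    obtain ⟨N, hN⟩ := exists_nat_gt ((b - a)/(b - x))
    refine ⟨N, ?_⟩
    have hxb' : (0:ℝ) < b - x := by linarith
    have hba : (0:ℝ) < b - a := by linarith
    have hN2 : (b - a)/(b - x) < (N:ℝ) + 2 := by
      have : (0:ℝ) ≤ (N:ℝ) := Nat.cast_nonneg N
      linarith
    have hN2pos : (0:ℝ) < (N:ℝ) + 2 := by positivity
    have : (b - a)/((N:ℝ) + 2) < b - x := by
      rw [div_lt_iff₀ hN2pos]
      have := (div_lt_iff₀ hxb').1 hN2
      linarith [mul_comm ((N:ℝ) + 2) (b - x)]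
    simp only [hcs]; linarith
  -- ACG* pieces
  have hACn : ∀ n : ℕ, ∃ C : ℕ → Set ℝ,
      (∀ m, IsClosed (C m) ∧ C m ⊆ Icc a b ∧ ACStar a b G (C m)) ∧
      Icc a (cseq n) = ⋃ m, C m := by
    intro n
    obtain ⟨hFcont, hFz, ⟨C, hC, hCuni⟩, hFd⟩ := hFc (cseq n) (hcseqI n)
    refine ⟨C, fun m => ?_, hCuni⟩
    obtain ⟨hcl, hsub, hAC⟩ := hC m
    have hsub' : C m ⊆ Icc a b :=
      subset_trans hsub (Icc_subset_Icc le_rfl (hcseqI n).2.le)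
    refine ⟨hcl, hsub', ?_⟩
    have h2 : ACStar a (cseq n) G (C m) := by
      refine ACStar_congr hsub (fun x hx => ?_) hAC
      exact (hval (cseq n) (hcseqI n) x hx).symm
    exact (ACStar_iff_sub le_rfl (hcseqI n).2.le hsub).2 h2
  choose CC hCC hCCuni using hACn
  have hACG : ACGStar a b G (Icc a b) := by
    refine ⟨fun k => Nat.casesOn k ({b} : Set ℝ)
      (fun k' => CC (Nat.unpair k').1 (Nat.unpair k').2), fun k => ?_, ?_⟩
    · cases k with
      | zero =>
        exact ⟨isClosed_singleton, by simp [hab.le],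
          ACStar_singleton a b b G (right_mem_Icc.2 hab.le)⟩
      | succ k' =>
        exact hCC (Nat.unpair k').1 (Nat.unpair k').2
    · ext x
      simp only [mem_iUnion]
      constructor
      · intro hx
        rcases eq_or_lt_of_le hx.2 with hbx | hbx
        · refine ⟨0, ?_⟩
          show x ∈ ({b} : Set ℝ)
          rw [hbx]
          exact rfl
        · obtain ⟨n, hn⟩ := hcseq_gt x hbx
          have : x ∈ Icc a (cseq n) := ⟨hx.1, hn.le⟩
          rw [hCCuni n] at this
          obtain ⟨m, hm⟩ := mem_iUnion.1 this
          refine ⟨Nat.pair n m + 1, ?_⟩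
          simp only [Nat.unpair_pair]
          exact hm
      · rintro ⟨k, hk⟩
        cases k with
        | zero =>
          have hxb : x ∈ ({b} : Set ℝ) := hk
          rw [mem_singleton_iff] at hxb
          rw [hxb]; exact right_mem_Icc.2 hab.le
        | succ k' =>
          exact (hCC (Nat.unpair k').1 (Nat.unpair k').2).2.1 hk
  -- derivative a.e.
  have hder : ∀ᵐ x ∂(volume.restrict (Icc a b)), HasDerivAt G (f x) x := by
    rw [ae_iff]
    set B := {x : ℝ | ¬ HasDerivAt G (f x) x} with hB
    have hB1 : ∀ n : ℕ, volume (B ∩ Ioo a (cseq n)) = 0 := by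
      intro n
      obtain ⟨hFcont, hFz, hFACG, hFd⟩ := hFc (cseq n) (hcseqI n)
      have h0 : (volume.restrict (Icc a (cseq n)))
          {x | ¬ HasDerivAt (Fc (cseq n)) (f x) x} = 0 := ae_iff.1 hFd
      obtain ⟨N, hNsub, hNmeas, hN0⟩ := exists_measurable_superset_of_null h0
      have hN0' : volume (N ∩ Icc a (cseq n)) = 0 := by
        rwa [Measure.restrict_apply hNmeas] at hN0
      refine measure_mono_null ?_ hN0'
      rintro x ⟨hxB, hxI⟩
      constructor
      · by_contra hxN
        have hP : HasDerivAt (Fc (cseq n)) (f x) x := by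
          by_contra hcon
          exact hxN (hNsub hcon)
        have hev : Fc (cseq n) =ᶠ[nhds x] G := by
          filter_upwards [(isOpen_Ioo).mem_nhds hxI] with y hy
          exact (hval (cseq n) (hcseqI n) y (Ioo_subset_Icc_self hy)).symm
        have : HasDerivAt G (f x) x := hP.congr_of_eventuallyEq hev.symm
        exact hxB this
      · exact Ioo_subset_Icc_self hxI
    have hB2 : volume (B ∩ Ioo a b) = 0 := by
      refine measure_mono_null ?_ (measure_iUnion_null hB1)
      rintro x ⟨hxB, hxI⟩
      obtain ⟨n, hn⟩ := hcseq_gt x hxI.2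
      exact mem_iUnion.2 ⟨n, hxB, hxI.1, hn⟩
    have hcov : B ⊆ (Icc a b)ᶜ ∪ ((Icc a b \ Ioo a b) ∪ (B ∩ Ioo a b)) := by
      intro x hx
      by_cases h1 : x ∈ Icc a b
      · by_cases h2 : x ∈ Ioo a b
        · exact Or.inr (Or.inr ⟨hx, h2⟩)
        · exact Or.inr (Or.inl ⟨h1, h2⟩)
      · exact Or.inl h1
    refine measure_mono_null hcov ?_
    refine measure_union_null ?_ (measure_union_null ?_ ?_)
    · rw [Measure.restrict_apply (measurableSet_Icc.compl)]
      simp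
    · rw [Measure.restrict_apply (measurableSet_Icc.diff measurableSet_Ioo)]
      refine measure_mono_null (fun x hx => hx.1) ?_
      rw [Icc_diff_Ioo_same hab.le, insert_eq]
      exact measure_union_null Real.volume_singleton Real.volume_singleton
    · exact le_antisymm ((Measure.le_iff'.1 Measure.restrict_le_self _).trans hB2.le)
        (zero_le)
  have hGden : HasDenjoyIntegralFn a b f G := ⟨hcont, hGa, hACG, hder⟩
  exact ⟨⟨G, hGden⟩, by rw [denjoyIntegral_eq hab.le hGden, hGb]⟩

lemma forward_left {a b L : ℝ} (hab : a < b) {f : ℝ → ℝ} (h1 : DenjoyIntegrable a b f)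
    (h2 : denjoyIntegral a b f = L) :
    Tendsto (fun c => denjoyIntegral c b f) (nhdsWithin a (Ioi a)) (nhds L) := by
  obtain ⟨F, hF⟩ := h1
  have hFb : F b = L := by rw [← denjoyIntegral_eq hab.le hF]; exact h2
  have hcw : ContinuousWithinAt F (Icc a b) a := hF.1 a (left_mem_Icc.2 hab.le)
  have h3 : Tendsto F (nhdsWithin a (Ioo a b)) (nhds (F a)) :=
    hcw.tendsto.mono_left (nhdsWithin_mono a Ioo_subset_Icc_self)
  have h4 : Tendsto (fun c => F b - F c) (nhdsWithin a (Ioo a b)) (nhds (F b - F a)) :=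
    tendsto_const_nhds.sub h3
  rw [hF.2.1, sub_zero] at h4
  rw [← nhdsWithin_Ioo_eq_nhdsGT hab, ← hFb]
  refine Tendsto.congr' ?_ h4
  filter_upwards [self_mem_nhdsWithin] with c hc
  exact (denjoyIntegral_subinterval hc.1.le hc.2.le le_rfl hF).symm

lemma forward_right {a b L : ℝ} (hab : a < b) {f : ℝ → ℝ} (h1 : DenjoyIntegrable a b f)
    (h2 : denjoyIntegral a b f = L) :
    Tendsto (fun c => denjoyIntegral a c f) (nhdsWithin b (Iio b)) (nhds L) := by
  obtain ⟨F, hF⟩ := h1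
  have hFb : F b = L := by rw [← denjoyIntegral_eq hab.le hF]; exact h2
  have hcw : ContinuousWithinAt F (Icc a b) b := hF.1 b (right_mem_Icc.2 hab.le)
  have h3 : Tendsto F (nhdsWithin b (Ioo a b)) (nhds (F b)) :=
    hcw.tendsto.mono_left (nhdsWithin_mono b Ioo_subset_Icc_self)
  rw [hFb] at h3
  rw [← nhdsWithin_Ioo_eq_nhdsLT hab]
  refine Tendsto.congr' ?_ h3
  filter_upwards [self_mem_nhdsWithin] with c hc
  have := denjoyIntegral_subinterval le_rfl hc.1.le hc.2.le hF
  rw [hF.2.1, sub_zero] at this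
  exact this.symm

/-- The Improper Integrals Lemma. -/
theorem improper_integrals_lemma (a b L : ℝ) (hab : a < b) (f : ℝ → ℝ)
    (hf : Measurable f) :
    ((∀ c ∈ Ioo a b, DenjoyIntegrable c b f) →
      ((DenjoyIntegrable a b f ∧ denjoyIntegral a b f = L) ↔
        Tendsto (fun c => denjoyIntegral c b f) (nhdsWithin a (Ioi a)) (nhds L))) ∧
    ((∀ c ∈ Ioo a b, DenjoyIntegrable a c f) →
      ((DenjoyIntegrable a b f ∧ denjoyIntegral a b f = L) ↔
        Tendsto (fun c => denjoyIntegral a c f) (nhdsWithin b (Iio b)) (nhds L))) := by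
  constructor
  · intro hc
    constructor
    · rintro ⟨h1, h2⟩; exact forward_left hab h1 h2
    · intro hT; exact glue_left hab hc hT
  · intro hc
    constructor
    · rintro ⟨h1, h2⟩; exact forward_right hab h1 h2
    · intro hT; exact glue_right hab hc hT
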